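/- (Lemma 3.1, second part: determinant of the Jacobian) Suppose that at a point y ∈ ℝ^n the matrix I_{sn} − h·Ā·F(y) is invertible. Then det(I_{sn} − h·Ā·F(y))·det(Dφ(y)) = det(exp(h·K))·det(I_{sn} − h·(Ā − C'·W̄)·F(y)). -/

import Mathlib

open Matrix

/-- The Jacobian matrix of a map `f : ℝ^ι → ℝ^ι` at a point `y`. -/
noncomputable def jac {ι : Type*} [Fintype ι] [DecidableEq ι]
    (f : (ι → ℝ) → (ι → ℝ)) (y : ι → ℝ) : Matrix ι ι ℝ :=
  LinearMap.toMatrix' ((fderiv ℝ f y).toLinearMap)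

noncomputable def mvCLM {n : ℕ} (M : Matrix (Fin n) (Fin n) ℝ) :
    (Fin n → ℝ) →L[ℝ] (Fin n → ℝ) :=
  LinearMap.toContinuousLinearMap M.mulVecLin

lemma toMatrix'_mvCLM {n : ℕ} (M : Matrix (Fin n) (Fin n) ℝ) :
    LinearMap.toMatrix' ((mvCLM M).toLinearMap) = M := by
  rw [show (mvCLM M).toLinearMap = M.mulVecLin from rfl, ← Matrix.toLin'_apply',
    LinearMap.toMatrix'_toLin']

lemma jac_comp {n : ℕ} (g k : (Fin n → ℝ) → (Fin n → ℝ)) (hg : Differentiable ℝ g)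
    (hk : Differentiable ℝ k) (y : Fin n → ℝ) :
    jac (fun z => g (k z)) y = jac g (k y) * jac k y := by
  unfold jac
  rw [show (fun z => g (k z)) = g ∘ k from rfl,
    fderiv_comp y (hg.differentiableAt) (hk.differentiableAt)]
  rw [ContinuousLinearMap.toLinearMap_comp, LinearMap.toMatrix'_comp]

lemma jac_of_scheme {n s : ℕ} (h : ℝ) (M : Matrix (Fin n) (Fin n) ℝ)
    (A : Fin s → Matrix (Fin n) (Fin n) ℝ) (u : Fin s → (Fin n → ℝ) → (Fin n → ℝ))
    (hu : ∀ j, Differentiable ℝ (u j)) (f : (Fin n → ℝ) → (Fin n → ℝ))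
    (hf : f = fun z => M.mulVec z + h • ∑ j, (A j).mulVec (u j z)) (y : Fin n → ℝ) :
    jac f y = M + h • ∑ j, (A j) * jac (u j) y := by
  have hder : HasFDerivAt f
      (mvCLM M + h • ∑ j, (mvCLM (A j)).comp (fderiv ℝ (u j) y)) y := by
    rw [hf]
    exact (mvCLM M).hasFDerivAt.add
      ((HasFDerivAt.fun_sum (fun j _ =>
        ((mvCLM (A j)).hasFDerivAt.comp y ((hu j).differentiableAt.hasFDerivAt)))).const_smul h)
  unfold jac
  rw [hder.fderiv]
  simp only [ContinuousLinearMap.coe_add, ContinuousLinearMap.coe_smul,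
    ContinuousLinearMap.coe_sum, ContinuousLinearMap.toLinearMap_comp, map_add, _root_.map_smul,
    map_sum, LinearMap.toMatrix'_comp, toMatrix'_mvCLM]

/-- **Lemma 3.1, second part.** The determinant of the Jacobian of an exponential
integrator. -/
theorem stmt_1 (n s : ℕ) (h : ℝ) (K : Matrix (Fin n) (Fin n) ℝ) (c : Fin s → ℝ)
    (g : (Fin n → ℝ) → (Fin n → ℝ)) (hg : Differentiable ℝ g)
    (Abar : Fin s → Fin s → Matrix (Fin n) (Fin n) ℝ)
    (Bbar : Fin s → Matrix (Fin n) (Fin n) ℝ)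
    (k : Fin s → (Fin n → ℝ) → (Fin n → ℝ))
    (hk : ∀ i, Differentiable ℝ (k i))
    (hkdef : ∀ i y, k i y =
      (NormedSpace.exp ((c i * h) • K)).mulVec y +
        h • ∑ j, (Abar i j).mulVec (g (k j y)))
    (φ : (Fin n → ℝ) → (Fin n → ℝ))
    (hφ : ∀ y, φ y =
      (NormedSpace.exp (h • K)).mulVec y + h • ∑ i, (Bbar i).mulVec (g (k i y)))
    -- the big block matrices
    (F : (Fin n → ℝ) → Matrix (Fin s × Fin n) (Fin s × Fin n) ℝ)
    (hF : ∀ y p q, F y p q = if p.1 = q.1 then jac g (k p.1 y) p.2 q.2 else 0)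
    (Ablk : Matrix (Fin s × Fin n) (Fin s × Fin n) ℝ)
    (hAblk : ∀ p q, Ablk p q = Abar p.1 q.1 p.2 q.2)
    (Wbar : Matrix (Fin n) (Fin s × Fin n) ℝ)
    (hWbar : ∀ a q, Wbar a q = Bbar q.1 a q.2)
    (C' : Matrix (Fin s × Fin n) (Fin n) ℝ)
    (hC' : ∀ p b, C' p b = NormedSpace.exp (((c p.1 - 1) * h) • K) p.2 b)
    (y : Fin n → ℝ)
    (hinv : IsUnit ((1 : Matrix (Fin s × Fin n) (Fin s × Fin n) ℝ) - h • (Ablk * F y))) :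
    ((1 : Matrix (Fin s × Fin n) (Fin s × Fin n) ℝ) - h • (Ablk * F y)).det * (jac φ y).det =
      (NormedSpace.exp (h • K)).det *
        ((1 : Matrix (Fin s × Fin n) (Fin s × Fin n) ℝ) - h • ((Ablk - C' * Wbar) * F y)).det := by
  set Eh : Matrix (Fin n) (Fin n) ℝ := NormedSpace.exp (h • K) with hEh
  set J : Fin s → Matrix (Fin n) (Fin n) ℝ := fun j => jac g (k j y) with hJ
  set D : Fin s → Matrix (Fin n) (Fin n) ℝ := fun i => jac (k i) y with hDdef
  have hc : ∀ j, jac (fun z => g (k j z)) y = J j * D j :=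
    fun j => jac_comp g (k j) hg (hk j) y
  -- Jacobians of the stages
  have hD : ∀ i, D i = NormedSpace.exp ((c i * h) • K) + h • ∑ j, Abar i j * (J j * D j) := by
    intro i
    show jac (k i) y = _
    rw [jac_of_scheme h _ (Abar i) (fun j => fun z => g (k j z))
      (fun j => hg.comp (hk j)) (k i) (funext (hkdef i)) y]
    simp only [hc]
  -- Jacobian of the flow map
  have hDphi : jac φ y = Eh + h • ∑ i, Bbar i * (J i * D i) := by
    rw [jac_of_scheme h Eh Bbar (fun i => fun z => g (k i z))
      (fun i => hg.comp (hk i)) φ (funext hφ) y]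
    simp only [hc]
  -- block matrix products, entrywise
  have hAFJ : ∀ p q : Fin s × Fin n, (Ablk * F y) p q = (Abar p.1 q.1 * J q.1) p.2 q.2 := by
    intro p q
    rw [Matrix.mul_apply, Fintype.sum_prod_type, Matrix.mul_apply]
    simp only [hAblk, hF, ← hJ, mul_ite, mul_zero]
    rw [Finset.sum_comm]
    simp [Finset.sum_ite_eq', Finset.sum_comm]
    rfl
  have hWFJ : ∀ (a : Fin n) (q : Fin s × Fin n),
      (Wbar * F y) a q = (Bbar q.1 * J q.1) a q.2 := by
    intro a q
    rw [Matrix.mul_apply, Fintype.sum_prod_type, Matrix.mul_apply]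
    simp only [hWbar, hF, ← hJ, mul_ite, mul_zero]
    rw [Finset.sum_comm]
    simp [Finset.sum_ite_eq', Finset.sum_comm]
    rfl
  set G : Matrix (Fin s × Fin n) (Fin n) ℝ := Matrix.of (fun p b => D p.1 p.2 b) with hG
  -- the stage equation in block form
  have hMG : ((1 : Matrix (Fin s × Fin n) (Fin s × Fin n) ℝ) - h • (Ablk * F y)) * G
      = C' * Eh := by
    ext p b
    rw [Matrix.sub_mul, Matrix.one_mul, Matrix.smul_mul, Matrix.sub_apply, Matrix.smul_apply]
    have h1 : ((Ablk * F y) * G) p b = (∑ j, Abar p.1 j * (J j * D j)) p.2 b := by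
      rw [Matrix.mul_apply, Fintype.sum_prod_type, Matrix.sum_apply]
      refine Finset.sum_congr rfl fun j _ => ?_
      rw [← Matrix.mul_assoc, Matrix.mul_apply]
      refine Finset.sum_congr rfl fun d _ => ?_
      rw [hAFJ]
      rfl
    have h2 : (C' * Eh) p b
        = (NormedSpace.exp (((c p.1 - 1) * h) • K) * Eh) p.2 b := by
      rw [Matrix.mul_apply, Matrix.mul_apply]
      exact Finset.sum_congr rfl fun d _ => by rw [hC']
    rw [h1, h2, hEh, ← Matrix.exp_add_of_commute _ _
      (((Commute.refl K).smul_left _).smul_right _)]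
    have h3 : ((c p.1 - 1) * h) • K + h • K = (c p.1 * h) • K := by
      rw [← add_smul]; ring_nf
    rw [h3]
    have := congrFun (congrFun (hD p.1) p.2) b
    rw [Matrix.add_apply, Matrix.smul_apply] at this
    have hGv : G p b = D p.1 p.2 b := rfl
    rw [hGv, this]
    ring
  -- the flow Jacobian in block form
  have hphi2 : jac φ y = Eh + (h • (Wbar * F y)) * G := by
    rw [hDphi]
    congr 1
    rw [Matrix.smul_mul]
    ext a b
    rw [Matrix.smul_apply, Matrix.smul_apply, Matrix.sum_apply,
      Matrix.mul_apply, Fintype.sum_prod_type]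
    congr 1
    refine Finset.sum_congr rfl fun j _ => ?_
    rw [← Matrix.mul_assoc, Matrix.mul_apply]
    exact Finset.sum_congr rfl fun d _ => by rw [hWFJ]; rfl
  -- determinant algebra
  set M : Matrix (Fin s × Fin n) (Fin s × Fin n) ℝ := 1 - h • (Ablk * F y) with hM
  have hdet : IsUnit M.det := (Matrix.isUnit_iff_isUnit_det M).mp hinv
  have hGeq : G = M⁻¹ * (C' * Eh) := by
    have := congrArg (fun X => M⁻¹ * X) hMG
    simpa [← Matrix.mul_assoc, Matrix.nonsing_inv_mul M hdet] using this
  have hphi3 : jac φ y = (1 + (h • (Wbar * F y)) * M⁻¹ * C') * Eh := by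
    rw [hphi2, hGeq]
    simp only [Matrix.add_mul, Matrix.one_mul, Matrix.mul_assoc]
  have key : (1 + C' * ((h • (Wbar * F y)) * M⁻¹)) * M
      = 1 - h • ((Ablk - C' * Wbar) * F y) := by
    have hmm : C' * (h • (Wbar * F y) * M⁻¹) * M = h • (C' * (Wbar * F y)) := by
      rw [Matrix.mul_assoc, Matrix.mul_assoc, Matrix.nonsing_inv_mul M hdet, Matrix.mul_one,
        Matrix.mul_smul]
    rw [Matrix.add_mul, Matrix.one_mul, hmm, hM, Matrix.sub_mul, smul_sub, Matrix.mul_assoc]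
    abel
  calc M.det * (jac φ y).det
      = M.det * ((1 + (h • (Wbar * F y)) * M⁻¹ * C').det * Eh.det) := by
        rw [hphi3, Matrix.det_mul]
    _ = ((1 + C' * ((h • (Wbar * F y)) * M⁻¹)).det * M.det) * Eh.det := by
        rw [Matrix.det_one_add_mul_comm]; ring
    _ = ((1 : Matrix (Fin s × Fin n) (Fin s × Fin n) ℝ)
          - h • ((Ablk - C' * Wbar) * F y)).det * Eh.det := by
        rw [← Matrix.det_mul, key]
    _ = Eh.det * ((1 : Matrix (Fin s × Fin n) (Fin s × Fin n) ℝ)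
          - h • ((Ablk - C' * Wbar) * F y)).det := by ring
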